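/- Let λ > 0 and let f : ℝ → ℝ be continuously differentiable (C¹) with f(0) = 0, f nondecreasing on [0, ∞), 0 ≤ f(t) ≤ 1 for all t ≥ 0, and deriv f 0 ≥ λ. Then for every ε > 0 there exists a function g : ℝ → ℝ that is continuous piecewise linear on [0, ∞) with finitely many segments such that |f(t) − g(t)| ≤ ε · f(t) for all t ≥ 0. -/

import Mathlib

noncomputable def pwl (N : ℕ) (x y : ℕ → ℝ) (t : ℝ) : ℝ :=
  ∑ k ∈ Finset.range N,
    (y (k+1) - y k)/(x (k+1) - x k) * (max (x k) (min t (x (k+1))) - x k)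

lemma pwl_continuous (N : ℕ) (x y : ℕ → ℝ) : Continuous (pwl N x y) := by
  refine continuous_finset_sum _ fun k _ => ?_
  exact continuous_const.mul
    (((continuous_const.max (continuous_id.min continuous_const))).sub continuous_const)

lemma x_mono {N : ℕ} {x : ℕ → ℝ} (hx : ∀ i, i < N → x i < x (i+1)) :
    ∀ i j, i ≤ j → j ≤ N → x i ≤ x j := by
  intro i j hij hjN
  induction j with
  | zero => simp_all
  | succ n ih =>
    rcases Nat.eq_or_lt_of_le hij with h | h
    · exact le_of_eq (by rw [h])
    · exact le_trans (ih (Nat.lt_succ_iff.mp h) (le_trans (Nat.le_succ n) hjN))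
        (le_of_lt (hx n (Nat.lt_of_succ_le hjN)))

lemma pwl_seg {N : ℕ} {x : ℕ → ℝ} (y : ℕ → ℝ) (hx : ∀ i, i < N → x i < x (i+1))
    {j : ℕ} (hj : j < N) {t : ℝ} (ht : t ∈ Set.Icc (x j) (x (j+1))) :
    pwl N x y t = (y j - y 0) + (y (j+1) - y j)/(x (j+1) - x j) * (t - x j) := by
  have hmono := x_mono hx
  have key : ∀ k, k < N →
      (y (k+1) - y k)/(x (k+1) - x k) * (max (x k) (min t (x (k+1))) - x k)
      = if k < j then y (k+1) - y k
        else if k = j then (y (j+1) - y j)/(x (j+1) - x j) * (t - x j) else 0 := by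
    intro k hk
    rcases lt_trichotomy k j with h | h | h
    · have h1 : x (k+1) ≤ t := le_trans (hmono (k+1) j h (le_of_lt hj)) ht.1
      have h2 : x k ≤ x (k+1) := le_of_lt (hx k hk)
      rw [if_pos h, min_eq_right h1, max_eq_right h2,
        div_mul_cancel₀ _ (sub_ne_zero.mpr (ne_of_gt (hx k hk)))]
    · subst h
      have h1 : t ≤ x (k+1) := ht.2
      rw [if_neg (lt_irrefl k), if_pos rfl, min_eq_left h1, max_eq_right ht.1]
    · have h1 : t ≤ x k := le_trans ht.2 (hmono (j+1) k h (le_of_lt hk))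
      have h2 : t ≤ x (k+1) := le_trans h1 (le_of_lt (hx k hk))
      rw [if_neg (Nat.lt_asymm h), if_neg (Nat.ne_of_gt h), min_eq_left h2,
        max_eq_left h1, sub_self, mul_zero]
  rw [pwl, Finset.sum_congr rfl (fun k hk => key k (Finset.mem_range.mp hk))]
  rw [Finset.sum_ite]
  have e1 : Finset.filter (fun k => k < j) (Finset.range N) = Finset.range j := by
    ext k
    simp only [Finset.mem_filter, Finset.mem_range]
    exact ⟨fun h => h.2, fun h => ⟨lt_trans h hj, h⟩⟩
  rw [e1, Finset.sum_range_sub (fun k => y k),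
    Finset.sum_ite_eq' _ j (fun _ => (y (j+1) - y j)/(x (j+1) - x j) * (t - x j)),
    if_pos (by simp [Finset.mem_filter, Finset.mem_range, hj])]

lemma pwl_tail {N : ℕ} {x : ℕ → ℝ} (y : ℕ → ℝ) (hx : ∀ i, i < N → x i < x (i+1))
    {t : ℝ} (ht : x N ≤ t) : pwl N x y t = y N - y 0 := by
  have hmono := x_mono hx
  have key : ∀ k ∈ Finset.range N,
      (y (k+1) - y k)/(x (k+1) - x k) * (max (x k) (min t (x (k+1))) - x k)
      = y (k+1) - y k := by
    intro k hk
    have hk' := Finset.mem_range.mp hk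
    have h1 : x (k+1) ≤ t := le_trans (hmono (k+1) N hk' le_rfl) ht
    rw [min_eq_right h1, max_eq_right (le_of_lt (hx k hk')),
      div_mul_cancel₀ _ (sub_ne_zero.mpr (ne_of_gt (hx k hk')))]
  rw [pwl, Finset.sum_congr rfl key, Finset.sum_range_sub]

def ContPiecewiseLinearOnIci (g : ℝ → ℝ) : Prop :=
  ∃ (N : ℕ) (τ a b : Fin (N + 1) → ℝ),
    τ 0 = 0 ∧ StrictMono τ ∧
    (∀ k : Fin N, ∀ t ∈ Set.Icc (τ k.castSucc) (τ k.succ),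
      g t = a k.castSucc * t + b k.castSucc) ∧
    (∀ t ∈ Set.Ici (τ (Fin.last N)), g t = a (Fin.last N) * t + b (Fin.last N)) ∧
    ContinuousOn g (Set.Ici (0 : ℝ))

set_option maxHeartbeats 2000000 in
theorem piecewise_linear_relative_approximation
    (lam : ℝ) (hlam : 0 < lam) (f : ℝ → ℝ)
    (hC1 : ContDiff ℝ 1 f) (hf0 : f 0 = 0)
    (hmono : MonotoneOn f (Set.Ici (0 : ℝ)))
    (hbdd : ∀ t : ℝ, 0 ≤ t → 0 ≤ f t ∧ f t ≤ 1)
    (hderiv : lam ≤ deriv f 0) :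
    ∀ ε : ℝ, 0 < ε → ∃ g : ℝ → ℝ, ContPiecewiseLinearOnIci g ∧
      ∀ t : ℝ, 0 ≤ t → |f t - g t| ≤ ε * f t := by
  suffices H : ∀ ε : ℝ, 0 < ε → ε ≤ 1 → ∃ g : ℝ → ℝ, ContPiecewiseLinearOnIci g ∧
      ∀ t : ℝ, 0 ≤ t → |f t - g t| ≤ ε * f t by
    intro ε hε
    obtain ⟨g, hg, hb⟩ := H (min ε 1) (lt_min hε one_pos) (min_le_right _ _)
    refine ⟨g, hg, fun t ht => (hb t ht).trans ?_⟩
    exact mul_le_mul_of_nonneg_right (min_le_left _ _) (hbdd t ht).1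
  intro ε hε hε1
  set c := deriv f 0 with hc_def
  have hdiff : Differentiable ℝ f := hC1.differentiable one_ne_zero
  have hder : HasDerivAt f c 0 := (hdiff 0).hasDerivAt
  have hlo := hasDerivAt_iff_isLittleO.mp hder
  have hq : (0:ℝ) < ε * lam / 4 := by positivity
  have hev := (Asymptotics.isLittleO_iff.mp hlo) hq
  rw [Metric.eventually_nhds_iff] at hev
  obtain ⟨δ₀, hδ₀pos, hδ₀⟩ := hev
  set δ := δ₀ / 2 with hδdef
  have hδpos : 0 < δ := by positivity
  have hbound : ∀ t, 0 ≤ t → t ≤ δ → |f t - t * c| ≤ ε * lam / 4 * t := by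
    intro t ht1 ht2
    have hd : dist t 0 < δ₀ := by
      rw [Real.dist_eq, sub_zero, abs_of_nonneg ht1]; linarith
    have := hδ₀ hd
    simp only [hf0, sub_zero, smul_eq_mul, Real.norm_eq_abs] at this
    rwa [abs_of_nonneg ht1] at this
  have hflb : ∀ t, 0 ≤ t → t ≤ δ → lam / 2 * t ≤ f t := by
    intro t ht1 ht2
    have h2 := abs_le.mp (hbound t ht1 ht2)
    have hcl : t * lam ≤ t * c := mul_le_mul_of_nonneg_left hderiv ht1
    nlinarith [mul_nonneg (mul_nonneg (by linarith : (0:ℝ) ≤ 1 - ε) hlam.le) ht1]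
  have hfδ : 0 < f δ :=
    lt_of_lt_of_le (by positivity) (hflb δ hδpos.le le_rfl)
  have hseg1 : ∀ t, 0 ≤ t → t ≤ δ → |f t - f δ / δ * t| ≤ ε * f t := by
    intro t ht1 ht2
    have h1 := abs_le.mp (hbound t ht1 ht2)
    have h2 := abs_le.mp (hbound δ hδpos.le le_rfl)
    have h3 := hflb t ht1 ht2
    have hA : |f δ / δ * t - t * c| ≤ ε * lam / 4 * t := by
      have he : f δ / δ * t - t * c = (f δ - δ * c) * (t / δ) := by
        field_simp
      rw [he, abs_mul, abs_of_nonneg (div_nonneg ht1 hδpos.le)]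
      have h2' : |f δ - δ * c| ≤ ε * lam / 4 * δ := by
        have := hbound δ hδpos.le le_rfl
        rwa [show δ * c = c * δ from mul_comm _ _, show f δ - c * δ = f δ - δ * c by ring] at this
      calc |f δ - δ * c| * (t / δ) ≤ (ε * lam / 4 * δ) * (t / δ) :=
            mul_le_mul_of_nonneg_right h2' (div_nonneg ht1 hδpos.le)
        _ = ε * lam / 4 * t := by field_simp
    have hA' := abs_le.mp hA
    have hEf : ε * (lam / 2 * t) ≤ ε * f t := mul_le_mul_of_nonneg_left h3 hε.le
    rw [abs_le]
    constructor <;> nlinarith [h1.1, h1.2, hA'.1, hA'.2]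
  -- sup and tail cutoff
  set L := sSup (f '' Set.Ici (0:ℝ)) with hLdef
  have hbdda : BddAbove (f '' Set.Ici (0:ℝ)) := by
    refine ⟨1, ?_⟩
    rintro v ⟨t, ht, rfl⟩
    exact (hbdd t ht).2
  have hLge : ∀ t, 0 ≤ t → f t ≤ L := fun t ht => le_csSup hbdda ⟨t, ht, rfl⟩
  have hne : (f '' Set.Ici (0:ℝ)).Nonempty := ⟨f 0, 0, Set.self_mem_Ici, rfl⟩
  have hLlt : L - ε * f δ < L := by nlinarith [mul_pos hε hfδ]
  obtain ⟨v, hv, hvlt⟩ := exists_lt_of_lt_csSup hne hLlt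
  obtain ⟨T₀, hT₀, rfl⟩ := hv
  set T₁ := max T₀ δ with hT₁def
  have hT₁δ : δ ≤ T₁ := le_max_right _ _
  have hT₁0 : (0:ℝ) ≤ T₁ := le_trans hδpos.le hT₁δ
  have hfT₁ : L - ε * f δ < f T₁ :=
    lt_of_lt_of_le hvlt (hmono hT₀ hT₁0 (le_max_left _ _))
  set T := T₁ + 1 with hTdef
  have hT0 : (0:ℝ) ≤ T := by linarith
  have hTδ : 0 < T - δ := by linarith
  -- uniform continuity on [0, T]
  have huc := (isCompact_Icc (a := (0:ℝ)) (b := T)).uniformContinuousOn_of_continuous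
    (hC1.continuous.continuousOn)
  rw [Metric.uniformContinuousOn_iff] at huc
  obtain ⟨η, hη, hucη⟩ := huc (ε * f δ) (mul_pos hε hfδ)
  -- grid
  set m := ⌈(T - δ)/η⌉₊ + 1 with hmdef
  have hm0 : (0:ℝ) < (m:ℝ) := by positivity
  have hm0' : (m:ℝ) ≠ 0 := ne_of_gt hm0
  set st := (T - δ)/(m:ℝ) with hstdef
  have hst : 0 < st := div_pos hTδ hm0
  have hstη0 : st < η := by
    have h1 : (T - δ)/η < (m:ℝ) := by
      have := Nat.le_ceil ((T - δ)/η)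
      have : ((⌈(T - δ)/η⌉₊ : ℝ)) < (m:ℝ) := by rw [hmdef]; push_cast; linarith
      linarith [Nat.le_ceil ((T - δ)/η)]
    rw [hstdef, div_lt_iff₀ hm0]
    have := (div_lt_iff₀ hη).mp h1
    linarith
  have hstη : st < η := hstη0
  clear_value st
  set N := m + 1 with hNdef
  clear_value m
  obtain ⟨x, hx0, hxs⟩ : ∃ x : ℕ → ℝ, x 0 = 0 ∧ ∀ k : ℕ, x (k + 1) = δ + (k : ℝ) * st :=
    ⟨fun k => if k = 0 then 0 else δ + ((k - 1 : ℕ) : ℝ) * st, by simp, fun k => by simp⟩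
  set y : ℕ → ℝ := fun k => f (x k) with hydef
  have hy0 : y 0 = 0 := by simp [hydef, hx0, hf0]
  have hyf : ∀ k, y k = f (x k) := fun k => rfl
  clear_value y
  have hx : ∀ i, i < N → x i < x (i + 1) := by
    intro i _
    match i with
    | 0 => rw [hx0, hxs]; push_cast; linarith
    | n + 1 => rw [hxs, hxs]; push_cast; nlinarith
  have hxmono := x_mono hx
  have hmh : (m:ℝ) * st = T - δ := by rw [hstdef]; field_simp
  have hxN : x N = T := by
    rw [hNdef, hxs]
    rw [hmh]; ring
  have hxnn : ∀ i, i ≤ N → 0 ≤ x i := fun i hi => hx0 ▸ hxmono 0 i (Nat.zero_le i) hi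
  have hxleT : ∀ i, i ≤ N → x i ≤ T := fun i hi => hxN ▸ hxmono i N hi le_rfl
  refine ⟨pwl N x y, ?_, ?_⟩
  · -- structure
    refine ⟨N, fun k => x k.val,
      fun k => if k.val = N then 0 else (y (k.val + 1) - y k.val)/(x (k.val + 1) - x k.val),
      fun k => if k.val = N then y N
        else y k.val - (y (k.val + 1) - y k.val)/(x (k.val + 1) - x k.val) * x k.val,
      ?_, ?_, ?_, ?_, ?_⟩
    · simpa using hx0
    · rw [Fin.strictMono_iff_lt_succ]
      intro i
      simpa using hx i.val i.isLt
    · intro k t ht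
      have hkN : k.val < N := k.isLt
      have hkN' : k.val ≠ N := Nat.ne_of_lt hkN
      simp only [Fin.coe_castSucc, Fin.val_succ] at ht ⊢
      rw [pwl_seg y hx hkN ht, hy0, if_neg hkN', if_neg hkN']
      ring
    · intro t ht
      have ht' : x N ≤ t := by simpa using ht
      rw [pwl_tail y hx ht', hy0]
      simp [Fin.val_last]
    · exact (pwl_continuous N x y).continuousOn
  · -- error bound
    intro t ht
    rcases le_or_gt t δ with hcase | hcase
    · have hx1 : x 1 = δ := by rw [hxs]; push_cast; ring
      have ht' : t ∈ Set.Icc (x 0) (x 1) := by rw [hx0, hx1]; exact ⟨ht, hcase⟩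
      have h01 : 0 < N := by omega
      rw [pwl_seg y hx h01 ht', hy0, hx0, hx1]
      have hy1 : y 1 = f δ := by rw [hydef]; simp only []; rw [hx1]
      rw [hy1]
      have he : 0 - 0 + (f δ - 0) / (δ - 0) * (t - 0) = f δ / δ * t := by ring
      rw [he]
      exact hseg1 t ht hcase
    · rcases le_or_gt T t with hcase2 | hcase2
      · rw [pwl_tail y hx (by rw [hxN]; exact hcase2), hy0, sub_zero]
        have hyN : y N = f T := by rw [hydef]; simp only []; rw [hxN]
        rw [hyN]
        have h1 : f T ≤ f t := hmono hT0 ht hcase2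
        have h2 : f t ≤ L := hLge t ht
        have h3 : f T₁ ≤ f T := hmono hT₁0 hT0 (by linarith)
        have h4 : f δ ≤ f t := hmono hδpos.le ht (by linarith)
        have h5 : ε * f δ ≤ ε * f t := mul_le_mul_of_nonneg_left h4 hε.le
        rw [abs_of_nonneg (by linarith)]
        linarith
      · -- middle region
        set fl := ⌊(t - δ)/st⌋₊ with hfldef
        have htδ : 0 ≤ (t - δ)/st := div_nonneg (by linarith) hst.le
        have hfl1 : (fl : ℝ) ≤ (t - δ)/st := Nat.floor_le htδ
        have hfl2 : (t - δ)/st < (fl : ℝ) + 1 := Nat.lt_floor_add_one _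
        clear_value fl
        have hjm : fl + 1 ≤ m := by
          have hlt : (t - δ)/st < (m:ℝ) := by
            rw [div_lt_iff₀ hst]
            linarith [hmh]
          have : fl < m := by
            rw [hfldef]
            exact (Nat.floor_lt htδ).mpr hlt
          omega
        have hjN : fl + 1 < N := by omega
        have hxj : x (fl + 1) = δ + (fl:ℝ) * st := hxs fl
        have hxj1 : x (fl + 2) = δ + ((fl:ℝ) + 1) * st := by
          rw [hxs (fl + 1)]; push_cast; ring
        have hxj_le : x (fl + 1) ≤ t := by
          rw [hxj]
          have := (le_div_iff₀ hst).mp hfl1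
          linarith [(mul_le_mul_of_nonneg_right hfl1 hst.le).trans_eq
            (div_mul_cancel₀ (t - δ) (ne_of_gt hst))]
        have hxj1_ge : t ≤ x (fl + 2) := by
          rw [hxj1]
          have := (div_lt_iff₀ hst).mp hfl2
          linarith
        rw [pwl_seg y hx hjN ⟨hxj_le, hxj1_ge⟩, hy0, sub_zero]
        have hxjnn : 0 ≤ x (fl + 1) := hxnn _ (by omega)
        have hxj1nn : 0 ≤ x (fl + 2) := hxnn _ (by omega)
        have hyj : y (fl + 1) ≤ f t := by rw [hyf]; exact hmono hxjnn ht hxj_le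
        have hyj1 : f t ≤ y (fl + 2) := by rw [hyf]; exact hmono ht hxj1nn hxj1_ge
        have hΔx : 0 < x (fl + 2) - x (fl + 1) := sub_pos.mpr (hx _ hjN)
        have hΔy : 0 ≤ y (fl + 2) - y (fl + 1) := by
          rw [hyf, hyf]
          exact sub_nonneg.mpr (hmono hxjnn hxj1nn (hx _ hjN).le)
        have hub : (y (fl + 2) - y (fl + 1))/(x (fl + 2) - x (fl + 1)) * (t - x (fl + 1))
            ≤ y (fl + 2) - y (fl + 1) := by
          rw [div_mul_eq_mul_div, div_le_iff₀ hΔx]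
          exact mul_le_mul_of_nonneg_left (by linarith) hΔy
        have hlb : 0 ≤ (y (fl + 2) - y (fl + 1))/(x (fl + 2) - x (fl + 1)) * (t - x (fl + 1)) :=
          mul_nonneg (div_nonneg hΔy hΔx.le) (by linarith)
        have hdist : dist (x (fl + 2)) (x (fl + 1)) < η := by
          rw [Real.dist_eq, hxj, hxj1]
          rw [abs_of_nonneg (by linarith)]
          have he : δ + ((fl:ℝ) + 1) * st - (δ + (fl:ℝ) * st) = st := by ring
          rw [he]; exact hstη
        have hosc : dist (f (x (fl + 2))) (f (x (fl + 1))) < ε * f δ :=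
          hucη _ ⟨hxj1nn, hxleT _ (by omega)⟩ _ ⟨hxjnn, hxleT _ (by omega)⟩ hdist
        have hosc' : y (fl + 2) - y (fl + 1) < ε * f δ := by
          rw [hyf, hyf]
          rw [Real.dist_eq, abs_of_nonneg (by rw [hyf, hyf] at hΔy; exact hΔy)] at hosc
          exact hosc
        have hfδt : f δ ≤ f t := hmono hδpos.le ht hcase.le
        have hεt : ε * f δ ≤ ε * f t := mul_le_mul_of_nonneg_left hfδt hε.le
        rw [abs_le]
        constructor
        · linarith
        · linarith
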